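/- In the James space J with its boundedly complete basis (e_i), the shift operator S : J → J defined by S(e_i) = e_{i+1} is a linear isometry, and the operator T = I − S is weakly compact, while e_i*(T(e_i)) = 1 for all i. Consequently the basis (e_i) of J does not have the factorization property. -/

import Mathlib

open Filter Topology NormedSpace

/-- In the James space `J` with its boundedly complete basis `(e i)` (encoded here via
its defining properties: biorthogonal functionals, dense span, the basis is non-trivial
weak Cauchy with w*-limit `ess ∈ J** \ J`, and `J` is quasi-reflexive of order one,
`J** = ℝ·ess ⊕ J`), the shift `S`, `S (e i) = e (i+1)`, is a linear isometry; then
`T = I − S` is weakly compact, `eᵢ*(T eᵢ) = 1` for all `i`, and consequently the basis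
`(e i)` does not have the factorization property. -/
theorem stmt_4 {J : Type*} [NormedAddCommGroup J] [NormedSpace ℝ J] [CompleteSpace J]
    (e : ℕ → J) (estar : ℕ → J →L[ℝ] ℝ)
    (hbi : ∀ i j, estar i (e j) = if i = j then 1 else 0)
    (hdense : (Submodule.span ℝ (Set.range e)).topologicalClosure = ⊤)
    (ess : StrongDual ℝ (StrongDual ℝ J))
    (hwlim : ∀ f : StrongDual ℝ J, Tendsto (fun i => f (e i)) atTop (𝓝 (ess f)))
    (hnontriv : ∀ x : J, inclusionInDoubleDual ℝ J x ≠ ess)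
    (hquasi : ∀ F : StrongDual ℝ (StrongDual ℝ J), ∃ (c : ℝ) (x : J),
      F = c • ess + inclusionInDoubleDual ℝ J x)
    (S : J →L[ℝ] J) (hS : ∀ i, S (e i) = e (i + 1))
    (hSiso : ∀ x : J, ‖S x‖ = ‖x‖) :
    (∀ i, estar i ((ContinuousLinearMap.id ℝ J - S) (e i)) = 1) ∧
    IsCompact (closure
      ((fun x : J => (show WeakSpace ℝ J from (ContinuousLinearMap.id ℝ J - S) x)) ''
        Metric.closedBall 0 1)) ∧
    ¬ (∀ T : J →L[ℝ] J, (∃ δ > 0, ∀ i, δ ≤ |estar i (T (e i))|) →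
        ∃ A B : J →L[ℝ] J, B.comp (T.comp A) = ContinuousLinearMap.id ℝ J) := by
  set T : J →L[ℝ] J := ContinuousLinearMap.id ℝ J - S with hT
  -- the dual map
  set dm : (J →L[ℝ] J) → (StrongDual ℝ J →L[ℝ] StrongDual ℝ J) :=
    fun X => (ContinuousLinearMap.compL ℝ J J ℝ).flip X with hdm
  have hdmapp : ∀ (X : J →L[ℝ] J) (f : StrongDual ℝ J) (x : J), dm X f x = f (X x) := fun _ _ _ => rfl
  -- Part 1
  have part1 : ∀ i, estar i (T (e i)) = 1 := by
    intro i
    have : T (e i) = e i - e (i + 1) := by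
      simp [hT, ContinuousLinearMap.sub_apply, hS i]
    rw [this, map_sub, hbi, hbi, if_pos rfl, if_neg (by omega)]
    norm_num
  -- ess kills T* f
  have h1 : ∀ f : StrongDual ℝ J, ess (dm T f) = 0 := by
    intro f
    have ha : Tendsto (fun i => (dm T f) (e i)) atTop (𝓝 (ess (dm T f))) := hwlim _
    have hb : Tendsto (fun i => (dm T f) (e i)) atTop (𝓝 0) := by
      have h2 : Tendsto (fun i => f (e (i + 1))) atTop (𝓝 (ess f)) :=
        (hwlim f).comp (tendsto_add_atTop_nat 1)
      have := (hwlim f).sub h2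
      rw [sub_self] at this
      refine this.congr fun i => ?_
      rw [hdmapp]
      simp [hT, ContinuousLinearMap.sub_apply, map_sub, hS i]
    exact tendsto_nhds_unique ha hb
  -- image of T** is in J
  have h3 : ∀ F : StrongDual ℝ (StrongDual ℝ J), ∃ x : J,
      F.comp (dm T) = inclusionInDoubleDual ℝ J (T x) := by
    intro F
    obtain ⟨c, x, hF⟩ := hquasi F
    refine ⟨x, ?_⟩
    ext f
    rw [ContinuousLinearMap.comp_apply, hF]
    simp only [ContinuousLinearMap.add_apply, ContinuousLinearMap.coe_smul', Pi.smul_apply,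
      smul_eq_mul, h1 f, mul_zero, zero_add]
    exact hdmapp T f x
  -- the canonical weak embedding
  set j : WeakSpace ℝ J → WeakDual ℝ (StrongDual ℝ J) := fun x => inclusionInDoubleDual ℝ J x with hj
  have hjcont : Continuous j := by
    apply WeakBilin.continuous_of_continuous_eval
    intro f
    exact WeakBilin.eval_continuous ((topDualPairing ℝ J).flip) f
  have hjind : IsInducing j := by
    constructor
    rw [show (instTopologicalSpaceWeakDual ℝ (StrongDual ℝ J) : TopologicalSpace (WeakDual ℝ (StrongDual ℝ J))) =
      TopologicalSpace.induced (fun (F : WeakDual ℝ (StrongDual ℝ J)) f => topDualPairing ℝ (StrongDual ℝ J) F f)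
        Pi.topologicalSpace from rfl]
    rw [induced_compose]
    rfl
  have hjinj : Function.Injective j := fun x y hxy =>
    (inclusionInDoubleDualLi ℝ (E := J)).injective hxy
  have hjemb : IsEmbedding j := ⟨hjind, hjinj⟩
  -- Part 2
  have part2 : IsCompact (closure
      ((fun x : J => (show WeakSpace ℝ J from T x)) '' Metric.closedBall 0 1)) := by
    set Ψ : WeakDual ℝ (StrongDual ℝ J) → WeakDual ℝ (StrongDual ℝ J) := fun F => F.comp (dm T) with hΨ
    have hΨcont : Continuous Ψ := by
      apply WeakBilin.continuous_of_continuous_eval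
      intro f
      exact WeakBilin.eval_continuous (topDualPairing ℝ (StrongDual ℝ J)) (dm T f)
    set Bset : Set (WeakDual ℝ (StrongDual ℝ J)) :=
      WeakDual.toStrongDual ⁻¹' Metric.closedBall 0 1 with hBset
    have hBcomp : IsCompact Bset := WeakDual.isCompact_closedBall 0 1
    set C0 : Set (WeakDual ℝ (StrongDual ℝ J)) := Ψ '' Bset with hC0
    have hC0comp : IsCompact C0 := hBcomp.image hΨcont
    have hC0range : C0 ⊆ Set.range j := by
      rintro _ ⟨F, -, rfl⟩
      obtain ⟨x, hx⟩ := h3 F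
      exact ⟨T x, hx.symm⟩
    set s : Set (WeakSpace ℝ J) := j ⁻¹' C0 with hsdef
    have hscomp : IsCompact s := by
      rw [hjemb.isCompact_iff, Set.image_preimage_eq_of_subset hC0range]
      exact hC0comp
    have hsclosed : IsClosed s := (hC0comp.isClosed).preimage hjcont
    have hsub : (fun x : J => (show WeakSpace ℝ J from T x)) '' Metric.closedBall 0 1 ⊆ s := by
      rintro _ ⟨x, hx, rfl⟩
      show j (T x) ∈ C0
      have hjx : j (T x) = Ψ (inclusionInDoubleDual ℝ J x) := by
        show inclusionInDoubleDual ℝ J (T x)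
          = (inclusionInDoubleDual ℝ J x).comp (dm T)
        ext f; exact (hdmapp T f x).symm
      rw [hjx]
      refine ⟨_, ?_, rfl⟩
      show inclusionInDoubleDual ℝ J x ∈ Metric.closedBall 0 1
      rw [Metric.mem_closedBall]; refine (dist_zero_right (inclusionInDoubleDual ℝ J x)).le.trans ?_
      calc ‖inclusionInDoubleDual ℝ J x‖ ≤ ‖x‖ := double_dual_bound ℝ J x
        _ ≤ 1 := by simpa [Metric.mem_closedBall, dist_zero_right] using hx
    exact hscomp.of_isClosed_subset isClosed_closure (closure_minimal hsub hsclosed)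
  refine ⟨part1, part2, ?_⟩
  -- Part 3
  intro hfac
  obtain ⟨A, B, hAB⟩ := hfac T ⟨1, one_pos, fun i => by rw [part1 i]; norm_num⟩
  obtain ⟨x, hx⟩ := h3 (ess.comp (dm A))
  apply hnontriv (B (T x))
  ext f
  have key : (ess.comp (dm A)).comp (dm T) ((dm B) f) =
      inclusionInDoubleDual ℝ J (T x) ((dm B) f) := by rw [hx]
  calc inclusionInDoubleDual ℝ J (B (T x)) f = f (B (T x)) := rfl
    _ = (dm B f) (T x) := rfl
    _ = inclusionInDoubleDual ℝ J (T x) ((dm B) f) := rfl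
    _ = (ess.comp (dm A)).comp (dm T) ((dm B) f) := key.symm
    _ = ess (dm A (dm T (dm B f))) := rfl
    _ = ess f := by
        congr 1
        ext y
        rw [hdmapp, hdmapp, hdmapp]
        have : T (A y) = (T.comp A) y := rfl
        rw [this, show B ((T.comp A) y) = (B.comp (T.comp A)) y from rfl, hAB]
        rfl
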